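/- arXiv:2105.13292 — 3 statements merged into one kernel-verified Lean document; each statement's English description precedes it below -/
import Mathlib

section
/- The series ∑_{k=1}^∞ 4^{-k} * C(2k,k) * 2/((2k+1)(2k+2)) converges and equals π - 3. -/
open Finset intervalIntegral Real

noncomputable def cb (m : ℕ) : ℝ := ((2 * m).choose m : ℝ) / 4 ^ m

lemma cb_nonneg (m : ℕ) : 0 ≤ cb m := by unfold cb; positivity

lemma cb_zero : cb 0 = 1 := by simp [cb]

lemma cb_succ (m : ℕ) : cb (m + 1) * (2 * m + 2) = cb m * (2 * m + 1) := by
  have h := Nat.succ_mul_centralBinom_succ m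
  have h' : ((m : ℝ) + 1) * ((2 * (m + 1)).choose (m + 1) : ℝ)
      = 2 * (2 * m + 1) * ((2 * m).choose m : ℝ) := by
    exact_mod_cast congrArg (Nat.cast : ℕ → ℝ) h
  have h4 : (4 : ℝ) ^ (m + 1) = 4 ^ m * 4 := by ring
  simp only [cb]
  field_simp [cb, h4]
  linear_combination (2 * 4 ^ m) * h'

lemma cb_le_one (m : ℕ) : cb m ≤ 1 := by
  induction m with
  | zero => simp [cb_zero]
  | succ n ih =>
    have h := cb_succ n
    have h2 : (0:ℝ) < 2 * n + 2 := by positivity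
    nlinarith [cb_nonneg n, cb_nonneg (n+1)]

noncomputable def Pp (N : ℕ) (x : ℝ) : ℝ := ∑ m ∈ range (N + 1), cb m * x ^ (2 * m)

lemma hasDerivAt_Pp (N : ℕ) (x : ℝ) :
    HasDerivAt (Pp N) (∑ m ∈ range (N + 1), cb m * (2 * m) * x ^ (2 * m - 1)) x := by
  apply HasDerivAt.fun_sum
  intro m _
  have h := (hasDerivAt_pow (2 * m) x).const_mul (cb m)
  refine h.congr_deriv (Eq.symm ?_)
  push_cast
  ring

lemma key_poly (N : ℕ) (x : ℝ) :
    (1 - x ^ 2) * (∑ m ∈ range (N + 1), cb m * (2 * m) * x ^ (2 * m - 1)) - x * Pp N x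
      = -((2 * N + 2) * cb (N + 1) * x ^ (2 * N + 1)) := by
  have hterm : ∀ m : ℕ, (1 - x ^ 2) * (cb m * (2 * m) * x ^ (2 * m - 1)) - x * (cb m * x ^ (2 * m))
      = cb m * (2 * m) * x ^ (2 * m - 1) - cb (m + 1) * (2 * (m + 1)) * x ^ (2 * (m + 1) - 1) := by
    intro m
    have hc : cb (m + 1) * (2 * m + 2) = cb m * (2 * m + 1) := cb_succ m
    cases m with
    | zero =>
      norm_num at hc ⊢
      linear_combination (-x) * hc
    | succ j =>
      have e1 : 2 * (j + 1) - 1 = 2 * j + 1 := by omega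
      have e2 : 2 * (j + 1 + 1) - 1 = 2 * j + 3 := by omega
      have e3 : 2 * (j + 1) = 2 * j + 2 := by omega
      rw [e1, e2, e3]
      push_cast at hc ⊢
      linear_combination x ^ (2 * j + 3) * hc
  have tel := Finset.sum_range_sub' (fun m => cb m * (2 * m) * x ^ (2 * m - 1)) (N + 1)
  have expand : (1 - x ^ 2) * (∑ m ∈ range (N + 1), cb m * (2 * m) * x ^ (2 * m - 1)) - x * Pp N x
      = ∑ m ∈ range (N + 1), ((1 - x ^ 2) * (cb m * (2 * m) * x ^ (2 * m - 1))
          - x * (cb m * x ^ (2 * m))) := by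
    simp [Pp, Finset.mul_sum, Finset.sum_sub_distrib]
  rw [expand]
  simp only [hterm]
  push_cast at tel
  rw [tel]
  have e : 2 * (N + 1) - 1 = 2 * N + 1 := by omega
  rw [e]
  push_cast
  ring


noncomputable def gg (N : ℕ) (s : ℝ) : ℝ := (2 * N + 2) * cb (N + 1) * s ^ (2 * N + 1) / √(1 - s ^ 2)

lemma continuous_Pp (N : ℕ) : Continuous (Pp N) := by
  unfold Pp
  exact continuous_finset_sum _ fun m _ => continuous_const.mul (continuous_pow (2 * m))

lemma Pp_zero_eval (N : ℕ) : Pp N 0 = 1 := by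
  unfold Pp
  rw [Finset.sum_eq_single 0]
  · simp [cb_zero]
  · intro m _ hm
    have : 2 * m ≠ 0 := by omega
    simp [this]
  · simp

lemma hasDerivAt_q (N : ℕ) {t : ℝ} (h1 : -1 < t) (h2 : t < 1) :
    HasDerivAt (fun t => √(1 - t ^ 2) * Pp N t) (-(gg N t)) t := by
  have hpos : 0 < 1 - t ^ 2 := by nlinarith
  have hne : (1 : ℝ) - t ^ 2 ≠ 0 := ne_of_gt hpos
  have hs : HasDerivAt (fun t : ℝ => 1 - t ^ 2) (-(2 * t)) t := by
    simpa using (hasDerivAt_pow 2 t).const_sub 1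
  have hsqrt := hs.sqrt hne
  have hmul := hsqrt.mul (hasDerivAt_Pp N t)
  refine hmul.congr_deriv (Eq.symm ?_)
  have hsne : √(1 - t ^ 2) ≠ 0 := by positivity
  have hsq : √(1 - t ^ 2) ^ 2 = 1 - t ^ 2 := Real.sq_sqrt hpos.le
  have key := key_poly N t
  unfold gg
  field_simp
  linear_combination (-1) * key -
    (∑ m ∈ range (N + 1), cb m * (2 * (m : ℝ)) * t ^ (2 * m - 1)) * hsq -
    √(1 - t ^ 2) ^ 2 * (Finset.sum_congr rfl fun (m : ℕ) _ => (by ring :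
      2 * cb m * (m : ℝ) * t ^ (2 * m - 1) = cb m * (2 * (m : ℝ)) * t ^ (2 * m - 1)) :
      ∑ m ∈ range (N + 1), 2 * cb m * (m : ℝ) * t ^ (2 * m - 1)
        = ∑ m ∈ range (N + 1), cb m * (2 * (m : ℝ)) * t ^ (2 * m - 1))

lemma continuousOn_gg (N : ℕ) {x : ℝ} (hx1 : x < 1) :
    ContinuousOn (gg N) (Set.Icc 0 x) := by
  apply ContinuousOn.div
  · exact (continuous_const.mul (continuous_pow (2 * N + 1))).continuousOn
  · exact (Real.continuous_sqrt.comp (continuous_const.sub (continuous_pow 2))).continuousOn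
  · intro s hs
    have : 0 < 1 - s ^ 2 := by
      rcases hs with ⟨h0, h1⟩
      nlinarith [lt_of_le_of_lt h1 hx1]
    positivity

lemma sqrtP_eq (N : ℕ) {x : ℝ} (hx0 : 0 ≤ x) (hx1 : x < 1) :
    √(1 - x ^ 2) * Pp N x = 1 - ∫ s in (0:ℝ)..x, gg N s := by
  have hcont : ContinuousOn (fun t => √(1 - t ^ 2) * Pp N t) (Set.Icc 0 x) :=
    ((Real.continuous_sqrt.comp (continuous_const.sub (continuous_pow 2))).mul
      (continuous_Pp N)).continuousOn
  have hderiv : ∀ t ∈ Set.Ioo (0:ℝ) x, HasDerivWithinAt (fun t => √(1 - t ^ 2) * Pp N t)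
      (-(gg N t)) (Set.Ioi t) t := by
    intro t ht
    exact (hasDerivAt_q N (by linarith [ht.1]) (lt_trans ht.2 hx1)).hasDerivWithinAt
  have hint : IntervalIntegrable (fun s => -(gg N s)) MeasureTheory.volume 0 x := by
    apply ContinuousOn.intervalIntegrable
    rw [Set.uIcc_of_le hx0]
    exact (continuousOn_gg N hx1).neg
  have := intervalIntegral.integral_eq_sub_of_hasDeriv_right_of_le hx0 hcont hderiv hint
  rw [intervalIntegral.integral_neg] at this
  have h0 : √(1 - (0:ℝ) ^ 2) * Pp N 0 = 1 := by simp [Pp_zero_eval]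
  rw [h0] at this
  linarith [this]


lemma gg_integral_bounds (N : ℕ) {x : ℝ} (hx0 : 0 ≤ x) (hx1 : x < 1) :
    0 ≤ (∫ s in (0:ℝ)..x, gg N s) ∧
      (∫ s in (0:ℝ)..x, gg N s) ≤ x ^ (2 * N + 2) / √(1 - x ^ 2) := by
  have hxpos : 0 < 1 - x ^ 2 := by nlinarith
  have hsx : 0 < √(1 - x ^ 2) := Real.sqrt_pos.mpr hxpos
  have hint : IntervalIntegrable (gg N) MeasureTheory.volume 0 x := by
    apply ContinuousOn.intervalIntegrable
    rw [Set.uIcc_of_le hx0]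
    exact continuousOn_gg N hx1
  constructor
  · apply intervalIntegral.integral_nonneg hx0
    intro s hs
    unfold gg
    exact div_nonneg (mul_nonneg (mul_nonneg (by positivity) (cb_nonneg _)) (pow_nonneg hs.1 _))
      (Real.sqrt_nonneg _)
  · have hmono : (∫ s in (0:ℝ)..x, gg N s)
        ≤ ∫ s in (0:ℝ)..x, ((2 * N + 2) / √(1 - x ^ 2)) * s ^ (2 * N + 1) := by
      apply intervalIntegral.integral_mono_on hx0 hint
      · exact (ContinuousOn.intervalIntegrable (by fun_prop)).mono_set (by rw [Set.uIcc_of_le hx0])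
      · intro s hs
        have hs1 : s ≤ x := hs.2
        have hs0 : 0 ≤ s := hs.1
        have h1 : 0 < 1 - s ^ 2 := by nlinarith [lt_of_le_of_lt hs1 hx1]
        have hss : √(1 - x ^ 2) ≤ √(1 - s ^ 2) := Real.sqrt_le_sqrt (by nlinarith)
        have hsle : 0 < √(1 - s ^ 2) := Real.sqrt_pos.mpr h1
        unfold gg
        rw [div_le_iff₀ hsle]
        have hcb := cb_le_one (N + 1)
        have hcbn := cb_nonneg (N + 1)
        have hp : (0:ℝ) ≤ s ^ (2 * N + 1) := by positivity
        calc (2 * ↑N + 2) * cb (N + 1) * s ^ (2 * N + 1)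
            ≤ (2 * ↑N + 2) * 1 * s ^ (2 * N + 1) := by
              apply mul_le_mul_of_nonneg_right _ hp
              apply mul_le_mul_of_nonneg_left hcb (by positivity)
          _ = (2 * ↑N + 2) * s ^ (2 * N + 1) := by ring
          _ ≤ (2 * ↑N + 2) / √(1 - x ^ 2) * s ^ (2 * N + 1) * √(1 - s ^ 2) := by
              rw [div_mul_eq_mul_div, div_mul_eq_mul_div, le_div_iff₀ hsx]
              have : (0:ℝ) ≤ (2 * ↑N + 2) * s ^ (2 * N + 1) := by positivity
              calc (2 * ↑N + 2) * s ^ (2 * N + 1) * √(1 - x ^ 2)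
                  ≤ (2 * ↑N + 2) * s ^ (2 * N + 1) * √(1 - s ^ 2) :=
                    mul_le_mul_of_nonneg_left hss this
                _ = (2 * ↑N + 2) * s ^ (2 * N + 1) * √(1 - s ^ 2) := rfl
    have heval : (∫ s in (0:ℝ)..x, ((2 * N + 2) / √(1 - x ^ 2)) * s ^ (2 * N + 1))
        = x ^ (2 * N + 2) / √(1 - x ^ 2) := by
      rw [intervalIntegral.integral_const_mul, integral_pow]
      have : ((2 * N + 1 : ℕ) : ℝ) + 1 = 2 * ↑N + 2 := by push_cast; ring
      rw [this]
      field_simp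
      ring
    linarith [hmono, heval.le, heval.ge]

lemma fN_bounds (N : ℕ) {x : ℝ} (hx0 : 0 ≤ x) (hx1 : x < 1) :
    0 ≤ 2 * √((1 - x) / (1 + x)) - 2 * (1 - x) * Pp N x ∧
      2 * √((1 - x) / (1 + x)) - 2 * (1 - x) * Pp N x ≤ 2 * x ^ (2 * N + 2) := by
  have hxpos : 0 < 1 - x ^ 2 := by nlinarith
  have hsx : 0 < √(1 - x ^ 2) := Real.sqrt_pos.mpr hxpos
  have hx1' : (0:ℝ) < 1 - x := by linarith
  have hx2' : (0:ℝ) < 1 + x := by linarith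
  have hratio : √((1 - x) / (1 + x)) = (1 - x) / √(1 - x ^ 2) := by
    have hsq : ((1 - x) / √(1 - x ^ 2)) ^ 2 = (1 - x) / (1 + x) := by
      rw [div_pow, Real.sq_sqrt hxpos.le]
      field_simp
      ring
    rw [← hsq, Real.sqrt_sq (by positivity)]
  have hI := gg_integral_bounds N hx0 hx1
  have hq := sqrtP_eq N hx0 hx1
  set I := ∫ s in (0:ℝ)..x, gg N s with hIdef
  set s0 := √(1 - x ^ 2) with hs0def
  have hPp : Pp N x = (1 - I) / s0 := by
    field_simp at hq ⊢
    linarith [hq]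
  have hmain : 2 * √((1 - x) / (1 + x)) - 2 * (1 - x) * Pp N x = 2 * (1 - x) * I / s0 := by
    rw [hratio, hPp]
    field_simp
    ring
  rw [hmain]
  constructor
  · have : (0:ℝ) ≤ 2 * (1 - x) * I := by
      apply mul_nonneg (by positivity) hI.1
    positivity
  · have hs0sq : s0 ^ 2 = 1 - x ^ 2 := Real.sq_sqrt hxpos.le
    rw [div_le_iff₀ hsx]
    have h1 : 2 * (1 - x) * I ≤ 2 * (1 - x) * (x ^ (2 * N + 2) / s0) :=
      mul_le_mul_of_nonneg_left hI.2 (by linarith)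
    have h2 : 2 * (1 - x) * (x ^ (2 * N + 2) / s0) ≤ 2 * x ^ (2 * N + 2) * s0 := by
      rw [show 2 * (1 - x) * (x ^ (2 * N + 2) / s0) = 2 * (1 - x) * x ^ (2 * N + 2) / s0 by ring,
        div_le_iff₀ hsx]
      have hss : s0 * s0 = 1 - x ^ 2 := by nlinarith [hs0sq]
      calc 2 * (1 - x) * x ^ (2 * N + 2) ≤ 2 * (1 - x ^ 2) * x ^ (2 * N + 2) := by
            nlinarith [mul_nonneg (mul_nonneg (pow_nonneg hx0 (2 * N + 2)) hx0) hx1'.le]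
        _ = 2 * x ^ (2 * N + 2) * s0 * s0 := by rw [← hss]; ring
    linarith


lemma hasDerivAt_term (m : ℕ) (x : ℝ) :
    HasDerivAt (fun x : ℝ => cb m * (2 * x ^ (2 * m + 1) / (2 * (m : ℝ) + 1)
        - x ^ (2 * m + 2) / ((m : ℝ) + 1)))
      (cb m * (2 * x ^ (2 * m) - 2 * x ^ (2 * m + 1))) x := by
  have h1 := (((hasDerivAt_pow (2 * m + 1) x).const_mul 2).div_const (2 * (m : ℝ) + 1))
  have h2 := (hasDerivAt_pow (2 * m + 2) x).div_const ((m : ℝ) + 1)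
  have h := ((h1.sub h2).const_mul (cb m))
  refine h.congr_deriv (Eq.symm ?_)
  have e1 : 2 * m + 1 - 1 = 2 * m := by omega
  have e2 : 2 * m + 2 - 1 = 2 * m + 1 := by omega
  rw [e1, e2]
  have d1 : (2 * (m : ℝ) + 1) ≠ 0 := by
    have : (0:ℝ) < 2 * (m : ℝ) + 1 := by positivity
    exact ne_of_gt this
  have d2 : ((m : ℝ) + 1) ≠ 0 := by
    have : (0:ℝ) < (m : ℝ) + 1 := by positivity
    exact ne_of_gt this
  field_simp
  push_cast
  ring

lemma sum_deriv_eq (N : ℕ) (x : ℝ) :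
    ∑ m ∈ range (N + 1), cb m * (2 * x ^ (2 * m) - 2 * x ^ (2 * m + 1))
      = 2 * (1 - x) * Pp N x := by
  unfold Pp
  rw [Finset.mul_sum]
  apply Finset.sum_congr rfl
  intro m _
  rw [pow_succ]
  ring

lemma hasDerivAt_F (N : ℕ) {x : ℝ} (hx0 : 0 < x) (hx1 : x < 1) :
    HasDerivAt (fun x : ℝ => 2 * Real.arcsin x + 2 * √(1 - x ^ 2)
        - ∑ m ∈ range (N + 1), cb m * (2 * x ^ (2 * m + 1) / (2 * (m : ℝ) + 1)
            - x ^ (2 * m + 2) / ((m : ℝ) + 1)))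
      (2 * √((1 - x) / (1 + x)) - 2 * (1 - x) * Pp N x) x := by
  have hxpos : 0 < 1 - x ^ 2 := by nlinarith
  have hsx : 0 < √(1 - x ^ 2) := Real.sqrt_pos.mpr hxpos
  have ha := (Real.hasDerivAt_arcsin (by linarith) (ne_of_lt hx1)).const_mul 2
  have hs : HasDerivAt (fun t : ℝ => 1 - t ^ 2) (-(2 * x)) x := by
    simpa using (hasDerivAt_pow 2 x).const_sub 1
  have hsqrt := (hs.sqrt (ne_of_gt hxpos)).const_mul 2
  have hsum : HasDerivAt (fun x : ℝ => ∑ m ∈ range (N + 1),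
      cb m * (2 * x ^ (2 * m + 1) / (2 * (m : ℝ) + 1) - x ^ (2 * m + 2) / ((m : ℝ) + 1)))
      (2 * (1 - x) * Pp N x) x := by
    rw [← sum_deriv_eq N x]
    exact HasDerivAt.fun_sum fun m _ => hasDerivAt_term m x
  have h := (ha.add hsqrt).sub hsum
  refine h.congr_deriv (Eq.symm ?_)
  have hratio : √((1 - x) / (1 + x)) = (1 - x) / √(1 - x ^ 2) := by
    have hsq : ((1 - x) / √(1 - x ^ 2)) ^ 2 = (1 - x) / (1 + x) := by
      rw [div_pow, Real.sq_sqrt hxpos.le]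
      have h1 : (1:ℝ) + x ≠ 0 := by positivity
      have h2 : (1:ℝ) - x ^ 2 ≠ 0 := ne_of_gt hxpos
      field_simp
      ring
    rw [← hsq, Real.sqrt_sq (div_nonneg (by linarith) (Real.sqrt_nonneg _))]
  rw [hratio]
  field_simp
  ring

lemma E_eq (N : ℕ) :
    (∫ x in (0:ℝ)..1, (2 * √((1 - x) / (1 + x)) - 2 * (1 - x) * Pp N x))
      = π - 2 - ∑ m ∈ range (N + 1), cb m * (2 / (2 * (m : ℝ) + 1) - 1 / ((m : ℝ) + 1)) := by
  set F := fun x : ℝ => 2 * Real.arcsin x + 2 * √(1 - x ^ 2)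
      - ∑ m ∈ range (N + 1), cb m * (2 * x ^ (2 * m + 1) / (2 * (m : ℝ) + 1)
          - x ^ (2 * m + 2) / ((m : ℝ) + 1)) with hF
  have hcont : ContinuousOn F (Set.Icc 0 1) := by
    apply ContinuousOn.sub
    · exact ((continuous_const.mul Real.continuous_arcsin).add
        (continuous_const.mul
          (Real.continuous_sqrt.comp (continuous_const.sub (continuous_pow 2))))).continuousOn
    · apply continuousOn_finset_sum
      intro m _
      fun_prop
  have hderiv : ∀ x ∈ Set.Ioo (0:ℝ) 1, HasDerivWithinAt F
      (2 * √((1 - x) / (1 + x)) - 2 * (1 - x) * Pp N x) (Set.Ioi x) x := fun x hx =>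
    (hasDerivAt_F N hx.1 hx.2).hasDerivWithinAt
  have c1 : ContinuousOn (fun x : ℝ => √((1 - x) / (1 + x))) (Set.Icc 0 1) := by
    apply Real.continuous_sqrt.comp_continuousOn
    apply ContinuousOn.div (by fun_prop) (by fun_prop)
    intro x hx
    have : (0:ℝ) < 1 + x := by linarith [hx.1]
    exact ne_of_gt this
  have c2 : Continuous (fun x : ℝ => 2 * (1 - x) * Pp N x) :=
    (continuous_const.mul (continuous_const.sub continuous_id)).mul (continuous_Pp N)
  have hint : IntervalIntegrable (fun x : ℝ => 2 * √((1 - x) / (1 + x)) - 2 * (1 - x) * Pp N x)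
      MeasureTheory.volume 0 1 := by
    apply ContinuousOn.intervalIntegrable
    rw [Set.uIcc_of_le zero_le_one]
    exact (continuousOn_const.mul c1).sub c2.continuousOn
  have key := intervalIntegral.integral_eq_sub_of_hasDeriv_right_of_le zero_le_one hcont
    hderiv hint
  rw [key]
  simp only [hF]
  have e1 : √(1 - (1:ℝ) ^ 2) = 0 := by norm_num
  have e0 : √(1 - (0:ℝ) ^ 2) = 1 := by norm_num
  have s0 : ∑ m ∈ range (N + 1), cb m * (2 * (0:ℝ) ^ (2 * m + 1) / (2 * (m : ℝ) + 1)
      - (0:ℝ) ^ (2 * m + 2) / ((m : ℝ) + 1)) = 0 :=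
    Finset.sum_eq_zero fun m _ => by
      rw [zero_pow (by omega), zero_pow (by omega)]; ring
  have s1 : ∑ m ∈ range (N + 1), cb m * (2 * (1:ℝ) ^ (2 * m + 1) / (2 * (m : ℝ) + 1)
      - (1:ℝ) ^ (2 * m + 2) / ((m : ℝ) + 1))
      = ∑ m ∈ range (N + 1), cb m * (2 / (2 * (m : ℝ) + 1) - 1 / ((m : ℝ) + 1)) :=
    Finset.sum_congr rfl fun m _ => by rw [one_pow, one_pow, mul_one]
  rw [Real.arcsin_one, Real.arcsin_zero, e1, e0, s0, s1]
  ring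


lemma E_bounds (N : ℕ) :
    0 ≤ (∫ x in (0:ℝ)..1, (2 * √((1 - x) / (1 + x)) - 2 * (1 - x) * Pp N x)) ∧
      (∫ x in (0:ℝ)..1, (2 * √((1 - x) / (1 + x)) - 2 * (1 - x) * Pp N x))
        ≤ 2 / (2 * N + 3) := by
  have c1 : ContinuousOn (fun x : ℝ => √((1 - x) / (1 + x))) (Set.Icc 0 1) := by
    apply Real.continuous_sqrt.comp_continuousOn
    apply ContinuousOn.div (by fun_prop) (by fun_prop)
    intro x hx
    have : (0:ℝ) < 1 + x := by linarith [hx.1]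
    exact ne_of_gt this
  have c2 : Continuous (fun x : ℝ => 2 * (1 - x) * Pp N x) :=
    (continuous_const.mul (continuous_const.sub continuous_id)).mul (continuous_Pp N)
  have hcon : ContinuousOn (fun x : ℝ => 2 * √((1 - x) / (1 + x)) - 2 * (1 - x) * Pp N x)
      (Set.Icc 0 1) := (continuousOn_const.mul c1).sub c2.continuousOn
  have hint : IntervalIntegrable (fun x : ℝ => 2 * √((1 - x) / (1 + x)) - 2 * (1 - x) * Pp N x)
      MeasureTheory.volume 0 1 := by
    apply ContinuousOn.intervalIntegrable
    rwa [Set.uIcc_of_le zero_le_one]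
  have hbnd : ∀ x ∈ Set.Icc (0:ℝ) 1,
      0 ≤ 2 * √((1 - x) / (1 + x)) - 2 * (1 - x) * Pp N x ∧
        2 * √((1 - x) / (1 + x)) - 2 * (1 - x) * Pp N x ≤ 2 * x ^ (2 * N + 2) := by
    intro x hx
    rcases lt_or_eq_of_le hx.2 with h | h
    · exact ⟨(fN_bounds N hx.1 h).1, (fN_bounds N hx.1 h).2.trans (by norm_num)⟩
    · subst h
      norm_num
  constructor
  · exact intervalIntegral.integral_nonneg zero_le_one fun x hx => (hbnd x hx).1
  · have hmono : (∫ x in (0:ℝ)..1, (2 * √((1 - x) / (1 + x)) - 2 * (1 - x) * Pp N x))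
        ≤ ∫ x in (0:ℝ)..1, 2 * x ^ (2 * N + 2) := by
      apply intervalIntegral.integral_mono_on zero_le_one hint
      · exact (continuous_const.mul (continuous_pow (2 * N + 2))).intervalIntegrable 0 1
      · exact fun x hx => (hbnd x hx).2
    have heval : (∫ x in (0:ℝ)..1, 2 * x ^ (2 * N + 2)) = 2 / (2 * (N:ℝ) + 3) := by
      rw [intervalIntegral.integral_const_mul, integral_pow]
      have : ((2 * N + 2 : ℕ) : ℝ) + 1 = 2 * (N:ℝ) + 3 := by push_cast; ring
      rw [this]
      norm_num
      rw [div_eq_mul_inv]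
    calc _ ≤ ∫ x in (0:ℝ)..1, 2 * x ^ (2 * N + 2) := hmono
      _ = 2 / (2 * (N:ℝ) + 3) := heval

theorem stmt_1 :
    HasSum (fun k : ℕ =>
        ((2 * (k + 1)).choose (k + 1) : ℝ) / 4 ^ (k + 1) *
          (2 / ((2 * (k : ℝ) + 3) * (2 * (k : ℝ) + 4))))
      (Real.pi - 3) := by
  set f : ℕ → ℝ := fun k : ℕ =>
      ((2 * (k + 1)).choose (k + 1) : ℝ) / 4 ^ (k + 1) *
        (2 / ((2 * (k : ℝ) + 3) * (2 * (k : ℝ) + 4))) with hf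
  set E : ℕ → ℝ := fun N =>
      ∫ x in (0:ℝ)..1, (2 * √((1 - x) / (1 + x)) - 2 * (1 - x) * Pp N x) with hE
  have hfA : ∀ k : ℕ, f k = cb (k + 1) * (2 / (2 * ((k:ℝ) + 1) + 1) - 1 / (((k:ℝ) + 1) + 1)) := by
    intro k
    rw [hf]
    simp only [cb]
    have h1 : (2 * (k:ℝ) + 3) ≠ 0 := by positivity
    have h2 : (2 * (k:ℝ) + 4) ≠ 0 := by positivity
    have h3 : (2 * ((k:ℝ) + 1) + 1) ≠ 0 := by positivity
    have h4 : (((k:ℝ) + 1) + 1) ≠ 0 := by positivity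
    have h5 : (4:ℝ) ^ (k + 1) ≠ 0 := by positivity
    field_simp
    ring
  have hpartial : ∀ n : ℕ, ∑ k ∈ range n, f k = π - 3 - E n := by
    intro n
    have hsum := Finset.sum_range_succ' (fun m => cb m * (2 / (2 * (m:ℝ) + 1) - 1 / ((m:ℝ) + 1)))
      n
    have hA0 : cb 0 * (2 / (2 * ((0:ℕ):ℝ) + 1) - 1 / (((0:ℕ):ℝ) + 1)) = 1 := by
      norm_num [cb_zero]
    have hEeq : E n = π - 2 - ∑ m ∈ range (n + 1), cb m * (2 / (2 * (m:ℝ) + 1)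
        - 1 / ((m:ℝ) + 1)) := E_eq n
    have : ∑ k ∈ range n, f k
        = ∑ m ∈ range (n + 1), cb m * (2 / (2 * (m:ℝ) + 1) - 1 / ((m:ℝ) + 1)) - 1 := by
      rw [hsum, hA0]
      push_cast
      rw [Finset.sum_congr rfl fun k _ => (hfA k)]
      ring
    rw [this]
    have hsumval : ∑ m ∈ range (n + 1), cb m * (2 / (2 * (m:ℝ) + 1) - 1 / ((m:ℝ) + 1))
        = π - 2 - E n := by linarith [hEeq]
    rw [hsumval]
    ring
  have hfnonneg : ∀ k, 0 ≤ f k := by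
    intro k
    rw [hf]
    positivity
  have hEtend : Filter.Tendsto E Filter.atTop (nhds 0) := by
    apply squeeze_zero (fun n => (E_bounds n).1) (fun n => (E_bounds n).2)
    have h1 : Filter.Tendsto (fun n : ℕ => 2 * (n:ℝ) + 3) Filter.atTop Filter.atTop := by
      apply Filter.tendsto_atTop_add_const_right
      exact (tendsto_natCast_atTop_atTop).const_mul_atTop two_pos
    have h2 := h1.inv_tendsto_atTop
    have h3 := h2.const_mul (2:ℝ)
    simpa [div_eq_mul_inv] using h3
  have htend : Filter.Tendsto (fun n => ∑ k ∈ range n, f k) Filter.atTop (nhds (π - 3)) := by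
    simp only [hpartial]
    simpa using tendsto_const_nhds.sub hEtend
  have hsummable : Summable f := by
    apply summable_of_sum_range_le hfnonneg (c := π - 3)
    intro n
    rw [hpartial n]
    linarith [(E_bounds n).1]
  have huniq : ∑' k, f k = π - 3 :=
    tendsto_nhds_unique hsummable.hasSum.tendsto_sum_nat htend
  exact huniq ▸ hsummable.hasSum
end

section
/- Let u_{nm} ≥ 0 for 0 ≤ n ≤ m and U(x) = ∑_{0≤n≤m} u_{nm} L_{nm}(x) as above (values in [0, ∞]). Then ∫_{−1}^{1} U(x) dx = 2 ∑_{k=1}^∞ ∑_{m−n=2k−1, n≥0} 4^{−k} C(2k,k) u_{nm}. -/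
open MeasureTheory
open Finset
open scoped ENNReal

lemma sum_range_two_mul {M : Type*} [AddCommMonoid M] (f : ℕ → M) (K : ℕ) :
    ∑ N ∈ range (2*K), f N = ∑ q ∈ range K, (f (2*q) + f (2*q+1)) := by
  induction K with
  | zero => simp
  | succ K ih =>
      have : 2 * (K+1) = (2*K) + 1 + 1 := by ring
      rw [this, sum_range_succ, sum_range_succ, ih, sum_range_succ, add_assoc]
lemma countBits (L : ℕ) : ∀ B t : ℕ,
    ((range (2^L * B)).filter (fun N => ∑ i ∈ range L, N / 2^i % 2 = t)).card
      = B * L.choose t := by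
  induction L with
  | zero =>
      intro B t
      rcases t with _ | t
      · simp
      · simp
  | succ L ih =>
      intro B t
      have h2 : 2^(L+1) * B = 2 * (2^L * B) := by ring
      have hcond : ∀ N : ℕ, (∑ i ∈ range (L+1), N / 2^i % 2)
          = N % 2 + ∑ i ∈ range L, (N/2) / 2^i % 2 := by
        intro N
        rw [Finset.sum_range_succ' (fun i => N / 2^i % 2) L]
        simp only [pow_zero, Nat.div_one]
        rw [add_comm]
        congr 1
        apply Finset.sum_congr rfl
        intro i _
        rw [Nat.div_div_eq_div_mul, pow_succ']
      rw [h2, Finset.card_filter, sum_range_two_mul]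
      have e1 : ∀ q : ℕ, ((if ∑ i ∈ range (L+1), (2*q) / 2^i % 2 = t then 1 else 0)
          + if ∑ i ∈ range (L+1), (2*q+1) / 2^i % 2 = t then 1 else 0)
          = ((if ∑ i ∈ range L, q / 2^i % 2 = t then 1 else 0)
          + if ∑ i ∈ range L, q / 2^i % 2 + 1 = t then (1:ℕ) else 0) := by
        intro q
        rw [hcond, hcond]
        have : (2*q) % 2 = 0 := by omega
        have h1 : (2*q+1) % 2 = 1 := by omega
        have h3 : (2*q)/2 = q := by omega
        have h4 : (2*q+1)/2 = q := by omega
        rw [this, h1, h3, h4, zero_add, add_comm 1]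
      rw [Finset.sum_congr rfl (fun q _ => e1 q), Finset.sum_add_distrib]
      rw [← Finset.card_filter, ← Finset.card_filter, ih]
      rcases t with _ | t
      · have : (filter (fun q => ∑ i ∈ range L, q / 2^i % 2 + 1 = 0) (range (2^L * B))) = ∅ := by
          apply Finset.filter_false_of_mem; intro q _; omega
        simp [this]
      · have : (filter (fun q => ∑ i ∈ range L, q / 2^i % 2 + 1 = t + 1) (range (2^L*B)))
            = (filter (fun q => ∑ i ∈ range L, q / 2^i % 2 = t) (range (2^L*B))) := by
          apply Finset.filter_congr; intro q _; simp
        rw [this, ih, Nat.choose_succ_succ]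
        ring


lemma measure_floor (M : ℕ) (P : ℤ → Prop) [DecidablePred P] :
    volume {x : ℝ | x ∈ Set.Ico (-1:ℝ) 1 ∧ P ⌊(2:ℝ)^M * (x+1)⌋}
      = (((range (2^(M+1))).filter (fun N : ℕ => P (N:ℤ))).card : ℝ≥0∞) * (2^M : ℝ≥0∞)⁻¹ := by
  set c : ℝ := 2^M with hcdef
  have hc : (0:ℝ) < c := by positivity
  have h2c : (2:ℝ)^(M+1) = c * 2 := by rw [hcdef]; ring
  have hset : {x : ℝ | x ∈ Set.Ico (-1:ℝ) 1 ∧ P ⌊c * (x+1)⌋}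
      = ⋃ N ∈ (range (2^(M+1))).filter (fun N : ℕ => P (N:ℤ)),
          Set.Ico ((N:ℝ)/c - 1) (((N:ℝ)+1)/c - 1) := by
    ext x
    simp only [Set.mem_setOf_eq, Set.mem_iUnion, Finset.mem_filter, Finset.mem_range,
      Set.mem_Ico, exists_prop]
    constructor
    · rintro ⟨⟨hx1, hx2⟩, hP⟩
      set z := ⌊c * (x+1)⌋ with hz
      have h0 : (0:ℝ) ≤ c * (x+1) := by nlinarith
      have h1 : c * (x+1) < 2^(M+1) := by nlinarith
      have hz0 : 0 ≤ z := Int.floor_nonneg.mpr h0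
      have hz1 : z < 2^(M+1) := by
        have h : (z:ℝ) < 2^(M+1) := lt_of_le_of_lt (Int.floor_le _) h1
        exact_mod_cast h
      have hzz : ((z.toNat : ℕ) : ℝ) = (z:ℝ) := by
        have := Int.toNat_of_nonneg hz0
        exact_mod_cast congrArg (fun t : ℤ => (t:ℝ)) this
      refine ⟨z.toNat, ⟨?_, ?_⟩, ?_, ?_⟩
      · have h : (z.toNat : ℤ) < 2^(M+1) := by rwa [Int.toNat_of_nonneg hz0]
        exact_mod_cast h
      · rwa [Int.toNat_of_nonneg hz0]
      · rw [hzz, sub_le_iff_le_add, div_le_iff₀ hc]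
        have := Int.floor_le (c * (x+1))
        nlinarith
      · rw [hzz, lt_sub_iff_add_lt, lt_div_iff₀ hc]
        have := Int.lt_floor_add_one (c * (x+1))
        nlinarith
    · rintro ⟨N, ⟨hN, hP⟩, hx1, hx2⟩
      have hNc : (N:ℝ) + 1 ≤ 2^(M+1) := by exact_mod_cast Nat.succ_le_of_lt hN
      have hxlb : (N:ℝ)/c ≤ x + 1 := by linarith
      have hxub : x + 1 < ((N:ℝ)+1)/c := by linarith
      have hfl : ⌊c * (x+1)⌋ = (N:ℤ) := by
        rw [Int.floor_eq_iff]
        constructor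
        · push_cast
          calc (N:ℝ) = c * ((N:ℝ)/c) := by field_simp
          _ ≤ c * (x+1) := by exact mul_le_mul_of_nonneg_left hxlb hc.le
        · push_cast
          calc c * (x+1) < c * (((N:ℝ)+1)/c) := by exact mul_lt_mul_of_pos_left hxub hc
          _ = (N:ℝ) + 1 := by field_simp
      refine ⟨⟨?_, ?_⟩, by rwa [hfl]⟩
      · have h : (0:ℝ) ≤ (N:ℝ)/c := by positivity
        linarith
      · have h : ((N:ℝ)+1)/c ≤ 2 := by
          rw [div_le_iff₀ hc]; nlinarith
        linarith
  rw [hset]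
  rw [measure_biUnion_finset]
  · have hvol : ∀ N : ℕ, volume (Set.Ico ((N:ℝ)/c - 1) (((N:ℝ)+1)/c - 1)) = (2^M : ℝ≥0∞)⁻¹ := by
      intro N
      rw [Real.volume_Ico]
      have h : ((N:ℝ)+1)/c - 1 - ((N:ℝ)/c - 1) = ((2:ℝ)^M)⁻¹ := by
        rw [hcdef]; field_simp; ring
      rw [h, ENNReal.ofReal_inv_of_pos (by positivity)]
      congr 1
      rw [ENNReal.ofReal_pow (by norm_num)]
      norm_num
    rw [Finset.sum_congr rfl (fun N _ => hvol N), Finset.sum_const, nsmul_eq_mul]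
  · intro N hN N' hN' hne
    simp only [Function.onFun]
    rw [Set.Ico_disjoint_Ico]
    rcases lt_or_gt_of_ne hne with h | h
    · have h1 : ((N:ℝ)+1) ≤ (N':ℝ) := by exact_mod_cast h
      have h2 : ((N:ℝ)+1)/c ≤ (N':ℝ)/c := by gcongr
      exact le_trans (min_le_left _ _) (le_trans (by linarith) (le_max_right _ _))
    · have h1 : ((N':ℝ)+1) ≤ (N:ℝ) := by exact_mod_cast h
      have h2 : ((N':ℝ)+1)/c ≤ (N:ℝ)/c := by gcongr
      exact le_trans (min_le_right _ _) (le_trans (by linarith) (le_max_left _ _))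
  · intro N _
    exact measurableSet_Ico


lemma floor_digits (b : ℕ → ℤ) (hb : ∀ j, b j = 0 ∨ b j = 1) (y : ℝ)
    (hy : HasSum (fun j : ℕ => (b j : ℝ)/2^(j+1)) y)
    (htail : ∀ N : ℕ, ∃ j, N ≤ j ∧ b j = 0) (n : ℕ) :
    ⌊(2:ℝ)^(n+1) * y⌋ = ∑ j ∈ range (n+1), b j * 2^(n-j) := by
  set s : ℝ := ∑ j ∈ range (n+1), (b j : ℝ)/2^(j+1) with hs
  have ht : HasSum (fun j : ℕ => (b (j+(n+1)) : ℝ)/2^((j+(n+1))+1)) (y - s) := by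
    refine (hasSum_nat_add_iff (f := fun j : ℕ => (b j : ℝ)/2^(j+1)) (n+1)).mpr ?_
    rw [sub_add_cancel]
    exact hy
  have hT0 : 0 ≤ y - s := by
    refine ht.nonneg fun j => ?_
    rcases hb (j+(n+1)) with h | h <;> rw [h] <;> positivity
  have hg' := (hasSum_geometric_of_lt_one (by norm_num : (0:ℝ) ≤ 1/2)
      (by norm_num : (1:ℝ)/2 < 1)).mul_left ((1:ℝ)/2^(n+2))
  have hg : HasSum (fun j : ℕ => (1:ℝ)/2^((j+(n+1))+1)) (1/2^(n+1)) := by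
    have h1 : (fun j : ℕ => (1:ℝ)/2^((j+(n+1))+1)) = fun j : ℕ => 1/2^(n+2) * (1/2)^j := by
      funext j
      rw [div_pow, one_pow, div_mul_div_comm, one_mul, ← pow_add]
      congr 2
      omega
    have h2 : (1:ℝ)/2^(n+1) = 1/2^(n+2) * (1-1/2)⁻¹ := by
      rw [show ((1:ℝ)-1/2)⁻¹ = 2 by norm_num, pow_succ]
      field_simp
      ring
    rw [h1, h2]
    exact hg'
  have hTlt : y - s < 1/2^(n+1) := by
    obtain ⟨j0, hj0N, hj0⟩ := htail (n+1)
    refine hasSum_lt (i := j0 - (n+1)) (fun j => ?_) ?_ ht hg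
    · rcases hb (j+(n+1)) with h | h <;> rw [h] <;> norm_num <;> positivity
    · have hj : j0 - (n+1) + (n+1) = j0 := by omega
      rw [hj, hj0]
      simp only [Int.cast_zero, zero_div]
      positivity
  have hcast : ((∑ j ∈ range (n+1), b j * 2^(n-j) : ℤ) : ℝ) = 2^(n+1) * s := by
    push_cast
    rw [hs, Finset.mul_sum]
    refine Finset.sum_congr rfl fun j hj => ?_
    have hjn : j ≤ n := by simpa [Nat.lt_succ_iff] using hj
    have : (2:ℝ)^(n+1) = 2^(n-j) * 2^(j+1) := by
      rw [← pow_add]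
      congr 1
      omega
    rw [this]
    field_simp
  rw [Int.floor_eq_iff]
  constructor
  · rw [hcast]
    nlinarith [pow_pos (show (0:ℝ) < 2 by norm_num) (n+1)]
  · rw [hcast]
    have h2 : (0:ℝ) < 2^(n+1) := by positivity
    have := mul_lt_mul_of_pos_left hTlt h2
    rw [mul_one_div, div_self (ne_of_gt h2)] at this
    nlinarith

lemma floor_digits_mod (b : ℕ → ℤ) (hb : ∀ j, b j = 0 ∨ b j = 1) (y : ℝ)
    (hy : HasSum (fun j : ℕ => (b j : ℝ)/2^(j+1)) y)
    (htail : ∀ N : ℕ, ∃ j, N ≤ j ∧ b j = 0) (n : ℕ) :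
    ⌊(2:ℝ)^(n+1) * y⌋ % 2 = b n := by
  rw [floor_digits b hb y hy htail n, Finset.sum_range_succ]
  have h : ∑ j ∈ range n, b j * 2^(n-j) = 2 * ∑ j ∈ range n, b j * 2^(n-1-j) := by
    rw [Finset.mul_sum]
    refine Finset.sum_congr rfl fun j hj => ?_
    have hjn : j < n := Finset.mem_range.mp hj
    have : n - j = (n-1-j) + 1 := by omega
    rw [this, pow_succ]
    ring
  rw [h, Nat.sub_self, pow_zero, mul_one, add_comm, Int.add_mul_emod_self_left]
  rcases hb n with h' | h' <;> rw [h'] <;> norm_num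

lemma geom_shift (k : ℕ) : HasSum (fun j : ℕ => (1:ℝ)/2^((j+k)+1)) (1/2^k) := by
  have hg' := (hasSum_geometric_of_lt_one (by norm_num : (0:ℝ) ≤ 1/2)
      (by norm_num : (1:ℝ)/2 < 1)).mul_left ((1:ℝ)/2^(k+1))
  have h1 : (fun j : ℕ => (1:ℝ)/2^((j+k)+1)) = fun j : ℕ => 1/2^(k+1) * (1/2)^j := by
    funext j
    rw [div_pow, one_pow, div_mul_div_comm, one_mul, ← pow_add]
    congr 2
    omega
  have h2 : (1:ℝ)/2^k = 1/2^(k+1) * (1-1/2)⁻¹ := by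
    rw [show ((1:ℝ)-1/2)⁻¹ = 2 by norm_num, pow_succ]
    field_simp
    try ring
  rw [h1, h2]
  exact hg'

lemma bad_null :
    volume (⋃ N : ℕ, Set.range (fun v : Fin N → ℤ =>
      (∑ j : Fin N, (v j : ℝ)/2^((j:ℕ)+1)) + 1/2^N)) = 0 := by
  refine Set.Countable.measure_zero ?_ _
  exact Set.countable_iUnion fun N => Set.countable_range _

lemma digits_ae (d : ℝ → ℕ → ℤ)
    (hd : ∀ᵐ x ∂(volume.restrict (Set.Icc (-1 : ℝ) 1)),
      (∀ n, d x n = 1 ∨ d x n = -1) ∧ HasSum (fun n : ℕ => (d x n : ℝ) / 2 ^ (n + 1)) x) :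
    ∀ᵐ x ∂(volume.restrict (Set.Icc (-1 : ℝ) 1)),
      x ∈ Set.Ico (-1:ℝ) 1 ∧ ∀ j, d x j = 2 * (⌊(2:ℝ)^j * (x+1)⌋ % 2) - 1 := by
  have h1 : ∀ᵐ x ∂(volume.restrict (Set.Icc (-1 : ℝ) 1)), x ∈ Set.Icc (-1:ℝ) 1 :=
    ae_restrict_mem measurableSet_Icc
  have h2 : ∀ᵐ x ∂(volume.restrict (Set.Icc (-1 : ℝ) 1)), x ≠ 1 := by
    have hz : (volume.restrict (Set.Icc (-1:ℝ) 1)) {1} = 0 := by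
      rw [Measure.restrict_apply (measurableSet_singleton 1)]
      exact measure_mono_null Set.inter_subset_left Real.volume_singleton
    refine ae_iff.mpr ?_
    simpa only [not_not, Set.setOf_eq_eq_singleton] using hz
  have h3 : ∀ᵐ x ∂(volume.restrict (Set.Icc (-1 : ℝ) 1)),
      x ∉ (⋃ N : ℕ, Set.range (fun v : Fin N → ℤ =>
        (∑ j : Fin N, (v j : ℝ)/2^((j:ℕ)+1)) + 1/2^N)) := by
    have hcnt : (⋃ N : ℕ, Set.range (fun v : Fin N → ℤ =>
        (∑ j : Fin N, (v j : ℝ)/2^((j:ℕ)+1)) + 1/2^N)).Countable :=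
      Set.countable_iUnion fun N => Set.countable_range _
    have hz : (volume.restrict (Set.Icc (-1:ℝ) 1)) (⋃ N : ℕ, Set.range (fun v : Fin N → ℤ =>
        (∑ j : Fin N, (v j : ℝ)/2^((j:ℕ)+1)) + 1/2^N)) = 0 := by
      rw [Measure.restrict_apply hcnt.measurableSet]
      exact measure_mono_null Set.inter_subset_left (hcnt.measure_zero _)
    refine ae_iff.mpr ?_
    simpa only [not_not, Set.setOf_mem_eq] using hz
  filter_upwards [hd, h1, h2, h3] with x hx hIcc hne hbad
  obtain ⟨hpm, hsum⟩ := hx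
  have hxIco : x ∈ Set.Ico (-1:ℝ) 1 := ⟨hIcc.1, lt_of_le_of_ne hIcc.2 hne⟩
  refine ⟨hxIco, ?_⟩
  set b : ℕ → ℤ := fun j => (d x j + 1)/2 with hbdef
  have hdb : ∀ j, d x j = 2 * b j - 1 := by
    intro j
    rcases hpm j with h | h <;> simp [hbdef, h]
  have hb : ∀ j, b j = 0 ∨ b j = 1 := by
    intro j
    rcases hpm j with h | h <;> simp [hbdef, h]
  have hy : HasSum (fun j : ℕ => (b j : ℝ)/2^(j+1)) ((x+1)/2) := by
    have hA : HasSum (fun j : ℕ => (d x j : ℝ)/2^(j+1) * (1/2)) (x * (1/2)) :=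
      hsum.mul_right _
    have hB : HasSum (fun j : ℕ => (1:ℝ)/2^((j+1)+1)) (1/2^1) := geom_shift 1
    have hC := hA.add hB
    have heq : (fun j : ℕ => (d x j : ℝ)/2^(j+1) * (1/2) + 1/2^((j+1)+1))
        = fun j : ℕ => (b j : ℝ)/2^(j+1) := by
      funext j
      have : ((b j : ℝ)) = ((d x j : ℝ) + 1)/2 := by
        rw [hdb j]
        push_cast
        ring
      rw [this]
      rw [show (j+1)+1 = j+2 by omega, pow_succ]
      field_simp
      ring
    rw [heq] at hC
    convert hC using 1
    norm_num
    ring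
  have htail : ∀ N : ℕ, ∃ j, N ≤ j ∧ b j = 0 := by
    intro N
    by_contra hcon
    push_neg at hcon
    have hall : ∀ j, N ≤ j → d x j = 1 := by
      intro j hj
      rcases hb j with h | h
      · exact absurd h (hcon j hj)
      · rw [hdb j, h]
        norm_num
    apply hbad
    refine Set.mem_iUnion.mpr ⟨N, ⟨fun j => d x j, ?_⟩⟩
    have ht : HasSum (fun j : ℕ => (d x (j+N) : ℝ)/2^((j+N)+1))
        (x - ∑ j ∈ range N, (d x j : ℝ)/2^(j+1)) := by
      refine (hasSum_nat_add_iff (f := fun j : ℕ => (d x j : ℝ)/2^(j+1)) N).mpr ?_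
      rw [sub_add_cancel]
      exact hsum
    have ht' : HasSum (fun j : ℕ => (1:ℝ)/2^((j+N)+1))
        (x - ∑ j ∈ range N, (d x j : ℝ)/2^(j+1)) := by
      refine HasSum.congr_fun ht ?_
      intro j
      rw [hall (j+N) (by omega)]
      norm_num
    show (∑ j : Fin N, (d x (j:ℕ) : ℝ)/2^((j:ℕ)+1)) + 1/2^N = x
    rw [Fin.sum_univ_eq_sum_range (fun j => (d x j : ℝ)/2^(j+1)) N]
    have huniq := ht'.unique (geom_shift N)
    linarith
  intro j
  have key := floor_digits_mod b hb ((x+1)/2) hy htail j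
  have harg : (2:ℝ)^(j+1) * ((x+1)/2) = 2^j * (x+1) := by
    rw [pow_succ]
    ring
  rw [harg] at key
  rw [key]
  exact hdb j


lemma floor_pow_div (x : ℝ) (hx : 0 ≤ x) (j m : ℕ) (hjm : j ≤ m) :
    ⌊(2:ℝ)^j * x⌋ = ⌊(2:ℝ)^m * x⌋ / 2^(m-j) := by
  have h1 : (2:ℝ)^j * x = (2^m * x) / ((2^(m-j) : ℕ) : ℝ) := by
    push_cast
    rw [show (2:ℝ)^m = 2^(m-j) * 2^j by rw [← pow_add]; congr 1; omega]
    field_simp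
  have h2 : ⌊(2:ℝ)^j * x⌋₊ = ⌊(2:ℝ)^m * x⌋₊ / 2^(m-j) := by
    rw [h1, Nat.floor_div_natCast]
  have nn1 : (0:ℝ) ≤ 2^j * x := by positivity
  have nn2 : (0:ℝ) ≤ 2^m * x := by positivity
  have e1 : ⌊(2:ℝ)^j * x⌋ = ((⌊(2:ℝ)^j * x⌋₊ : ℕ) : ℤ) := by
    rw [← Int.floor_toNat, Int.toNat_of_nonneg (Int.floor_nonneg.mpr nn1)]
  have e2 : ⌊(2:ℝ)^m * x⌋ = ((⌊(2:ℝ)^m * x⌋₊ : ℕ) : ℤ) := by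
    rw [← Int.floor_toNat, Int.toNat_of_nonneg (Int.floor_nonneg.mpr nn2)]
  rw [e1, e2, h2]
  push_cast
  rfl



lemma key_measure (d : ℝ → ℕ → ℤ)
    (hd : ∀ᵐ x ∂(volume.restrict (Set.Icc (-1 : ℝ) 1)),
      (∀ n, d x n = 1 ∨ d x n = -1) ∧ HasSum (fun n : ℕ => (d x n : ℝ) / 2 ^ (n + 1)) x)
    (n k : ℕ) :
    (volume.restrict (Set.Icc (-1 : ℝ) 1)) {x | ∑ j ∈ Finset.Icc n (n+2*k+1), d x j = 0}
      = 2 * ((2*(k+1)).choose (k+1) : ℝ≥0∞) / 4^(k+1) := by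
  classical
  set m := n + 2*k+1 with hm
  set P : ℤ → Prop := fun N => ∑ j ∈ Finset.Icc n m, (2 * ((N / 2^(m-j)) % 2) - 1) = 0 with hP
  -- Step 1: replace by floor description
  have step1 : (volume.restrict (Set.Icc (-1 : ℝ) 1)) {x | ∑ j ∈ Finset.Icc n m, d x j = 0}
      = (volume.restrict (Set.Icc (-1 : ℝ) 1))
          {x : ℝ | x ∈ Set.Ico (-1:ℝ) 1 ∧ P ⌊(2:ℝ)^m * (x+1)⌋} := by
    refine measure_congr (Filter.eventuallyEq_set.mpr ?_)
    filter_upwards [digits_ae d hd] with x hx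
    have hsum : ∀ j ∈ Finset.Icc n m, d x j
        = 2 * ((⌊(2:ℝ)^m * (x+1)⌋ / 2^(m-j)) % 2) - 1 := by
      intro j hj
      have hjm : j ≤ m := (Finset.mem_Icc.mp hj).2
      rw [hx.2 j, floor_pow_div (x+1) (by linarith [hx.1.1]) j m hjm]
    constructor
    · intro h
      refine ⟨hx.1, ?_⟩
      show ∑ j ∈ Finset.Icc n m, (2 * (⌊(2:ℝ)^m * (x+1)⌋ / 2^(m-j) % 2) - 1) = 0
      rw [← Finset.sum_congr rfl hsum]
      exact h
    · intro h
      rw [Finset.sum_congr rfl hsum]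
      exact h.2
  -- Step 2: drop the restriction
  have hmeasset : MeasurableSet {x : ℝ | x ∈ Set.Ico (-1:ℝ) 1 ∧ P ⌊(2:ℝ)^m * (x+1)⌋} := by
    have hf : Measurable fun x : ℝ => ⌊(2:ℝ)^m * (x+1)⌋ :=
      ((measurable_id.add_const 1).const_mul ((2:ℝ)^m)).floor
    have : {x : ℝ | x ∈ Set.Ico (-1:ℝ) 1 ∧ P ⌊(2:ℝ)^m * (x+1)⌋}
        = Set.Ico (-1:ℝ) 1 ∩ (fun x : ℝ => ⌊(2:ℝ)^m * (x+1)⌋) ⁻¹' {z | P z} := rfl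
    rw [this]
    exact measurableSet_Ico.inter (hf (by trivial))
  have step2 : (volume.restrict (Set.Icc (-1 : ℝ) 1))
        {x : ℝ | x ∈ Set.Ico (-1:ℝ) 1 ∧ P ⌊(2:ℝ)^m * (x+1)⌋}
      = volume {x : ℝ | x ∈ Set.Ico (-1:ℝ) 1 ∧ P ⌊(2:ℝ)^m * (x+1)⌋} := by
    rw [Measure.restrict_apply hmeasset]
    congr 1
    apply Set.inter_eq_self_of_subset_left
    intro x hx
    exact ⟨hx.1.1, hx.1.2.le⟩
  -- Step 4: the count
  have hcount : ((range (2^(m+1))).filter (fun N : ℕ => P (N:ℤ))).card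
      = 2^n * ((2*(k+1)).choose (k+1)) := by
    have hiff : ∀ N : ℕ, P (N:ℤ) ↔ (∑ i ∈ range (2*(k+1)), N / 2^i % 2 = k+1) := by
      intro N
      have hre : ∑ j ∈ Finset.Icc n m, (N / 2^(m-j) % 2) 
          = ∑ i ∈ range (2*(k+1)), N / 2^i % 2 := by
        refine Finset.sum_nbij' (fun j => m - j) (fun i => m - i) ?_ ?_ ?_ ?_ ?_
        · intro j hj
          have := Finset.mem_Icc.mp hj
          show m - j ∈ range (2*(k+1))
          refine Finset.mem_range.mpr ?_
          omega
        · intro i hi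
          have := Finset.mem_range.mp hi
          show m - i ∈ Finset.Icc n m
          refine Finset.mem_Icc.mpr ?_
          omega
        · intro j hj
          have := Finset.mem_Icc.mp hj
          show m - (m - j) = j
          omega
        · intro i hi
          have := Finset.mem_range.mp hi
          show m - (m - i) = i
          omega
        · intro j hj
          rfl
      have hcast : ∑ j ∈ Finset.Icc n m, (2 * (((N:ℤ) / 2^(m-j)) % 2) - 1)
          = 2 * ((∑ j ∈ Finset.Icc n m, (N / 2^(m-j) % 2) : ℕ) : ℤ) - (2*(k+1)) := by
        have h1 : ∑ j ∈ Finset.Icc n m, (2 * ((N:ℤ) / 2^(m-j) % 2) - 1)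
            = ∑ j ∈ Finset.Icc n m, (2 * (((N / 2^(m-j) % 2 : ℕ) : ℤ)) - 1) := by
          refine Finset.sum_congr rfl fun j hj => ?_
          push_cast
          rfl
        have hcard : (Finset.Icc n m).card = 2*(k+1) := by
          rw [Nat.card_Icc]
          omega
        rw [h1, Finset.sum_sub_distrib, ← Finset.mul_sum, ← Nat.cast_sum,
          Finset.sum_const, hcard]
        push_cast
        ring
      constructor
      · intro h
        rw [hP] at h
        rw [hcast] at h
        rw [hre] at h
        omega
      · intro h
        show ∑ j ∈ Finset.Icc n m, (2 * ((N:ℤ) / 2^(m-j) % 2) - 1) = 0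
        rw [hcast, hre]
        omega
    have : (range (2^(m+1))).filter (fun N : ℕ => P (N:ℤ))
        = (range (2^(2*(k+1)) * 2^n)).filter
            (fun N => ∑ i ∈ range (2*(k+1)), N / 2^i % 2 = k+1) := by
      have hpow : 2^(m+1) = 2^(2*(k+1)) * 2^n := by
        rw [← pow_add]
        congr 1
        omega
      rw [hpow]
      exact Finset.filter_congr fun N _ => by simp [hiff N]
    rw [this, countBits, Nat.mul_comm]
  -- Step 5: assemble with arithmetic
  rw [step1, step2, measure_floor m P, hcount]
  push_cast
  have h2 : (2:ℝ≥0∞)^m = 2^n * 2^(2*k+1) := by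
    rw [← pow_add, hm, add_assoc]
  have hne1 : ((2:ℝ≥0∞)^n) ≠ 0 := by positivity
  have hne2 : ((2:ℝ≥0∞)^n) ≠ ⊤ := by
    exact ENNReal.pow_ne_top (by norm_num)
  have h4 : (4:ℝ≥0∞)^(k+1) = 2 * 2^(2*k+1) := by
    rw [show (4:ℝ≥0∞) = 2^2 by norm_num, ← pow_mul, show 2*(k+1) = (2*k+1)+1 by omega, pow_succ]
    ring
  rw [h2, h4, ENNReal.mul_inv (Or.inl hne1) (Or.inl hne2)]
  rw [ENNReal.div_eq_inv_mul, ENNReal.mul_inv (Or.inl (by norm_num)) (Or.inl (by norm_num))]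
  have hc1 : (2:ℝ≥0∞)^n * ((2*(k+1)).choose (k+1) : ℝ≥0∞) * ((2^n)⁻¹ * (2^(2*k+1))⁻¹)
      = (2^n * (2^n)⁻¹) * (((2*(k+1)).choose (k+1) : ℝ≥0∞) * (2^(2*k+1))⁻¹) := by ring
  rw [hc1, ENNReal.mul_inv_cancel hne1 hne2, one_mul]
  rw [show (2:ℝ≥0∞)⁻¹ * (2^(2*k+1))⁻¹ * (2 * (((2*(k+1)).choose (k+1)) : ℝ≥0∞))
      = (2 * 2⁻¹) * ((((2*(k+1)).choose (k+1)) : ℝ≥0∞) * (2^(2*k+1))⁻¹) by ring,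
    ENNReal.mul_inv_cancel (by norm_num) (by norm_num), one_mul]

/-- `U u d x` counts loops of the signed binary digit sequence `d x` with weights `u n m`,
where the pair `(n, m)` with `n ≤ m` contributes `u n m` iff `∑_{j=n}^m (d x)_j = 0`. -/
noncomputable def U (u : ℕ → ℕ → ENNReal) (d : ℝ → ℕ → ℤ) (x : ℝ) : ENNReal :=
  ∑' p : ℕ × ℕ,
    if p.1 ≤ p.2 ∧ (∑ j ∈ Finset.Icc p.1 p.2, d x j) = 0 then u p.1 p.2 else 0

lemma parity_measure (d : ℝ → ℕ → ℤ)
    (hd : ∀ᵐ x ∂(volume.restrict (Set.Icc (-1 : ℝ) 1)),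
      (∀ n, d x n = 1 ∨ d x n = -1) ∧ HasSum (fun n : ℕ => (d x n : ℝ) / 2 ^ (n + 1)) x)
    (n m : ℕ) (hpar : (m - n) % 2 = 0) (hnm : n ≤ m) :
    (volume.restrict (Set.Icc (-1 : ℝ) 1)) {x | ∑ j ∈ Finset.Icc n m, d x j = 0} = 0 := by
  · rw [measure_eq_zero_iff_ae_notMem]
    filter_upwards [hd] with x hx
    intro hmem
    have hsum0 : ∑ j ∈ Finset.Icc n m, d x j = 0 := hmem
    have h1 : ∀ j ∈ Finset.Icc n m, ((d x j : ZMod 2)) = 1 := by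
      intro j _
      rcases hx.1 j with h | h <;> rw [h] <;> decide
    have h2 : ((∑ j ∈ Finset.Icc n m, d x j : ℤ) : ZMod 2)
        = ∑ j ∈ Finset.Icc n m, ((d x j : ZMod 2)) := by push_cast; rfl
    rw [hsum0, Finset.sum_congr rfl h1, Finset.sum_const, Nat.card_Icc,
      nsmul_eq_mul, mul_one] at h2
    have h3 : (2 : ℕ) ∣ (m + 1 - n) := by
      have := (ZMod.natCast_eq_zero_iff (m+1-n) 2).mp h2.symm
      exact this
    omega

theorem stmt_15 (u : ℕ → ℕ → ℝ) (hu : ∀ n m, n ≤ m → 0 ≤ u n m)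
    (d : ℝ → ℕ → ℤ) (hmeas : ∀ n, Measurable fun x => d x n)
    (hd : ∀ᵐ x ∂(volume.restrict (Set.Icc (-1 : ℝ) 1)),
      (∀ n, d x n = 1 ∨ d x n = -1) ∧ HasSum (fun n : ℕ => (d x n : ℝ) / 2 ^ (n + 1)) x) :
    ∫⁻ x in Set.Icc (-1 : ℝ) 1, U (fun n m => ENNReal.ofReal (u n m)) d x =
      2 * ∑' (k : ℕ) (n : ℕ),
        ((2 * (k + 1)).choose (k + 1) : ENNReal) / 4 ^ (k + 1) *
          ENNReal.ofReal (u n (n + 2 * k + 1)) := by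
  classical
  set μ := volume.restrict (Set.Icc (-1 : ℝ) 1) with hμ
  have hmset : ∀ p : ℕ × ℕ, MeasurableSet {x : ℝ | p.1 ≤ p.2 ∧ (∑ j ∈ Finset.Icc p.1 p.2, d x j) = 0} := by
    intro p
    by_cases h : p.1 ≤ p.2
    · have : {x : ℝ | p.1 ≤ p.2 ∧ (∑ j ∈ Finset.Icc p.1 p.2, d x j) = 0}
          = (fun x => ∑ j ∈ Finset.Icc p.1 p.2, d x j) ⁻¹' {0} := by
        ext x
        simp [h]
      rw [this]
      exact (Finset.measurable_sum _ (fun j _ => hmeas j)) (measurableSet_singleton 0)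
    · have : {x : ℝ | p.1 ≤ p.2 ∧ (∑ j ∈ Finset.Icc p.1 p.2, d x j) = 0} = ∅ := by
        ext x
        simp [h]
      rw [this]
      exact MeasurableSet.empty
  have hswap : ∫⁻ x, U (fun n m => ENNReal.ofReal (u n m)) d x ∂μ
      = ∑' p : ℕ × ℕ, ∫⁻ x,
          (if p.1 ≤ p.2 ∧ (∑ j ∈ Finset.Icc p.1 p.2, d x j) = 0
            then ENNReal.ofReal (u p.1 p.2) else 0) ∂μ := by
    rw [show (fun x => U (fun n m => ENNReal.ofReal (u n m)) d x)
        = fun x => ∑' p : ℕ × ℕ, (if p.1 ≤ p.2 ∧ (∑ j ∈ Finset.Icc p.1 p.2, d x j) = 0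
            then ENNReal.ofReal (u p.1 p.2) else 0) from rfl]
    rw [lintegral_tsum]
    intro p
    exact (Measurable.ite (hmset p) measurable_const measurable_const).aemeasurable
  have hterm : ∀ p : ℕ × ℕ, (∫⁻ x,
      (if p.1 ≤ p.2 ∧ (∑ j ∈ Finset.Icc p.1 p.2, d x j) = 0
        then ENNReal.ofReal (u p.1 p.2) else 0) ∂μ)
      = ENNReal.ofReal (u p.1 p.2) * μ {x : ℝ | p.1 ≤ p.2 ∧ (∑ j ∈ Finset.Icc p.1 p.2, d x j) = 0} := by
    intro p
    rw [← lintegral_indicator_const (hmset p)]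
    congr 1
    funext x
    simp [Set.indicator_apply]
  rw [hswap, tsum_congr hterm]
  -- now reindex
  set f : ℕ × ℕ → ℝ≥0∞ := fun p => ENNReal.ofReal (u p.1 p.2)
      * μ {x : ℝ | p.1 ≤ p.2 ∧ (∑ j ∈ Finset.Icc p.1 p.2, d x j) = 0} with hf
  set g : ℕ × ℕ → ℝ≥0∞ := fun q => 2 * (((2 * (q.1 + 1)).choose (q.1 + 1) : ℝ≥0∞) / 4 ^ (q.1 + 1) *
          ENNReal.ofReal (u q.2 (q.2 + 2 * q.1 + 1))) with hg
  have hkey : ∀ k n : ℕ, f (n, n + 2*k + 1) = g (k, n) := by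
    intro k n
    have hset : {x : ℝ | n ≤ n + 2*k + 1 ∧ (∑ j ∈ Finset.Icc n (n + 2*k + 1), d x j) = 0}
        = {x : ℝ | (∑ j ∈ Finset.Icc n (n + 2*k + 1), d x j) = 0} := by
      ext x
      simp [Nat.le_add_right]
      omega
    rw [hf, hg]
    simp only
    rw [hset, key_measure d hd n k]
    rw [div_eq_mul_inv, div_eq_mul_inv]
    ring
  have hmain : ∑' p : ℕ × ℕ, f p = ∑' q : ℕ × ℕ, g q := by
    refine tsum_eq_tsum_of_ne_zero_bij (fun q => ((q : ℕ × ℕ).2, (q : ℕ × ℕ).2 + 2 * (q : ℕ × ℕ).1 + 1)) ?_ ?_ ?_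
    · intro q q' h
      have h1 : (q : ℕ × ℕ).2 = (q' : ℕ × ℕ).2 := congrArg Prod.fst h
      have h2 : (q : ℕ × ℕ).2 + 2 * (q : ℕ × ℕ).1 + 1
          = (q' : ℕ × ℕ).2 + 2 * (q' : ℕ × ℕ).1 + 1 := congrArg Prod.snd h
      apply Subtype.ext
      apply Prod.ext
      · omega
      · omega
    · intro p hp
      rw [Function.mem_support, hf] at hp
      have hle : p.1 ≤ p.2 := by
        by_contra hcon
        apply hp
        have hem : {x : ℝ | p.1 ≤ p.2 ∧ (∑ j ∈ Finset.Icc p.1 p.2, d x j) = 0} = ∅ := by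
          ext x
          simp [hcon]
        show ENNReal.ofReal (u p.1 p.2)
            * μ {x : ℝ | p.1 ≤ p.2 ∧ (∑ j ∈ Finset.Icc p.1 p.2, d x j) = 0} = 0
        rw [hem]
        simp
      have hodd : (p.2 - p.1) % 2 = 1 := by
        by_contra hcon
        apply hp
        have hz := parity_measure d hd p.1 p.2 (by omega) hle
        have heq : {x : ℝ | p.1 ≤ p.2 ∧ (∑ j ∈ Finset.Icc p.1 p.2, d x j) = 0}
            = {x : ℝ | (∑ j ∈ Finset.Icc p.1 p.2, d x j) = 0} := by
          ext x
          simp [hle]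
        show ENNReal.ofReal (u p.1 p.2)
            * μ {x : ℝ | p.1 ≤ p.2 ∧ (∑ j ∈ Finset.Icc p.1 p.2, d x j) = 0} = 0
        rw [heq, hμ] at *
        rw [hz, mul_zero]
      have hu2 : ENNReal.ofReal (u p.1 p.2) ≠ 0 := by
        intro h0
        apply hp
        show ENNReal.ofReal (u p.1 p.2)
            * μ {x : ℝ | p.1 ≤ p.2 ∧ (∑ j ∈ Finset.Icc p.1 p.2, d x j) = 0} = 0
        rw [h0, zero_mul]
      have hkrec : p.1 + 2 * ((p.2 - p.1)/2) + 1 = p.2 := by omega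
      have hgne : g ((p.2 - p.1)/2, p.1) ≠ 0 := by
        show 2 * ((((2 * ((p.2 - p.1)/2 + 1)).choose ((p.2 - p.1)/2 + 1) : ℝ≥0∞))
            / 4 ^ ((p.2 - p.1)/2 + 1)
            * ENNReal.ofReal (u p.1 (p.1 + 2 * ((p.2 - p.1)/2) + 1))) ≠ 0
        rw [hkrec]
        refine mul_ne_zero (by norm_num) (mul_ne_zero ?_ hu2)
        rw [ENNReal.div_ne_zero]
        constructor
        · exact_mod_cast (Nat.choose_pos (by omega)).ne'
        · exact ENNReal.pow_ne_top (by norm_num)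
      refine ⟨⟨((p.2 - p.1)/2, p.1), hgne⟩, ?_⟩
      apply Prod.ext
      · rfl
      · show p.1 + 2 * ((p.2 - p.1)/2) + 1 = p.2
        exact hkrec
    · intro q
      obtain ⟨⟨k, n⟩, hq⟩ := q
      exact hkey k n
  rw [hmain, hg, ENNReal.tsum_prod']
  calc ∑' (k : ℕ) (n : ℕ), 2 * (((2 * (k + 1)).choose (k + 1) : ℝ≥0∞) / 4 ^ (k + 1)
          * ENNReal.ofReal (u n (n + 2 * k + 1)))
      = ∑' (k : ℕ), 2 * ∑' (n : ℕ), (((2 * (k + 1)).choose (k + 1) : ℝ≥0∞) / 4 ^ (k + 1)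
          * ENNReal.ofReal (u n (n + 2 * k + 1))) := tsum_congr fun k => ENNReal.tsum_mul_left
    _ = 2 * ∑' (k : ℕ) (n : ℕ), (((2 * (k + 1)).choose (k + 1) : ℝ≥0∞) / 4 ^ (k + 1)
          * ENNReal.ofReal (u n (n + 2 * k + 1))) := ENNReal.tsum_mul_left
end

section
/- With U as above and all u_{nm} ≥ 0, the essential supremum of U on [−1,1] equals U(1/3) = ∑_{k=1}^∞ ∑_{m−n=2k−1, n≥0} u_{nm} (values in [0,∞]), i.e., U(x) ≤ U(1/3) for almost every x, with equality at x = ±1/3. -/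
open MeasureTheory

lemma lemA (n m : ℕ) (h : n ≤ m) :
    (∑ j ∈ Finset.Icc n m, (-1:ℤ)^j) = 0 ↔ Odd (m - n) := by
  rw [← Finset.Ico_add_one_right_eq_Icc, Finset.sum_Ico_eq_sum_range]
  simp_rw [pow_add, ← Finset.mul_sum, neg_one_geom_sum]
  have hmn : m + 1 - n = (m - n) + 1 := by omega
  rw [hmn]
  by_cases hO : Odd (m - n)
  · simp [Nat.even_add_one, Nat.not_even_iff_odd.mpr hO, hO]
  · have hne : ((-1:ℤ))^n ≠ 0 := pow_ne_zero _ (by norm_num)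
    simp [Nat.even_add_one, Nat.not_odd_iff_even.mp hO, hO, hne]

lemma lemB (ε : ℕ → ℤ) (hε : ∀ j, ε j = 1 ∨ ε j = -1)
    (n m : ℕ) (h : n ≤ m) (h0 : ∑ j ∈ Finset.Icc n m, ε j = 0) : Odd (m - n) := by
  have hc : ((m + 1 - n : ℕ) : ZMod 2) = 0 := by
    have h2 := congrArg (fun z : ℤ => (z : ZMod 2)) h0
    push_cast at h2
    rw [Finset.sum_congr rfl (g := fun _ => (1 : ZMod 2))
      (fun j _ => by rcases hε j with h1 | h1 <;> rw [h1] <;> simp <;> decide)] at h2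
    simpa [Nat.card_Icc] using h2
  have := (ZMod.natCast_eq_zero_iff (m + 1 - n) 2).mp hc
  rw [Nat.odd_iff]; omega

lemma alt_partial (i : ℕ) :
    ∑ j ∈ Finset.range i, ((-1:ℝ)^j)/2^(j+1) = (1 - (-1/2:ℝ)^i)/3 := by
  induction i with
  | zero => simp
  | succ n ih =>
    rw [Finset.sum_range_succ, ih, pow_succ, pow_succ]
    have h2 : ((-1:ℝ)/2)^n = (-1)^n / 2^n := by rw [div_pow]
    rw [h2]
    ring

lemma geom_tail (i : ℕ) : ∑' n : ℕ, ((1:ℝ)/2)^(n + i + 1) = (1/2)^i := by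
  have h : ∀ n : ℕ, ((1:ℝ)/2)^(n + i + 1) = (1/2)^n * (1/2)^(i+1) := by
    intro n; rw [← pow_add, Nat.add_assoc]
  rw [tsum_congr h, tsum_mul_right, tsum_geometric_two, pow_succ]
  ring

lemma geom_tail_summable (i : ℕ) : Summable (fun n : ℕ => ((1:ℝ)/2)^(n + i + 1)) := by
  have := summable_geometric_two.mul_right (((1:ℝ)/2)^(i+1))
  refine this.congr fun n => ?_
  rw [← pow_add, Nat.add_assoc]

lemma tail_bound (d : ℕ → ℤ) (hpm : ∀ n, d n = 1 ∨ d n = -1) (x : ℝ)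
    (hx : HasSum (fun n : ℕ => (d n : ℝ) / 2 ^ (n + 1)) x) (i : ℕ) :
    |x - ∑ j ∈ Finset.range i, (d j : ℝ)/2^(j+1)| ≤ (1/2)^i := by
  set f : ℕ → ℝ := fun n => (d n : ℝ) / 2 ^ (n + 1) with hf
  have htail : HasSum (fun n => f (n + i)) (x - ∑ j ∈ Finset.range i, f j) := by
    rw [hasSum_nat_add_iff i]
    simpa using hx
  rw [show x - ∑ j ∈ Finset.range i, f j = ∑' n, f (n + i) from htail.tsum_eq.symm]
  have hnorm : ∀ n : ℕ, ‖f (n + i)‖ = ((1:ℝ)/2)^(n + i + 1) := by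
    intro n
    rcases hpm (n + i) with h1 | h1 <;>
      · simp only [hf, h1, norm_div, norm_pow]
        norm_num [div_pow]
  have hs : Summable fun n => ‖f (n + i)‖ :=
    (geom_tail_summable i).congr fun n => (hnorm n).symm
  calc |∑' n, f (n + i)| ≤ ∑' n, ‖f (n + i)‖ := norm_tsum_le_tsum_norm hs
    _ = (1/2)^i := by rw [tsum_congr hnorm, geom_tail]

lemma digits_force (d : ℕ → ℤ) (hpm : ∀ n, d n = 1 ∨ d n = -1) (x : ℝ)
    (hx : HasSum (fun n : ℕ => (d n : ℝ) / 2 ^ (n + 1)) x) (k : ℕ)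
    (hxk : |x - 1/3| < (1/2)^k / 6) : ∀ i, i < k → d i = (-1)^i := by
  intro i
  induction i using Nat.strong_induction_on with
  | _ i IH =>
    intro hik
    have hP : ∑ j ∈ Finset.range (i+1), (d j : ℝ)/2^(j+1)
        = (1 - (-1/2:ℝ)^i)/3 + (d i : ℝ)/2^(i+1) := by
      rw [Finset.sum_range_succ, ← alt_partial i]
      congr 1
      refine Finset.sum_congr rfl fun j hj => ?_
      rw [IH j (Finset.mem_range.mp hj) (lt_trans (Finset.mem_range.mp hj) hik)]
      push_cast
      ring
    have hT := tail_bound d hpm x hx (i+1)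
    rw [hP] at hT
    by_contra hne
    have hdi2 : d i = -(-1:ℤ)^i := by
      rcases Nat.even_or_odd i with he | ho
      · rw [he.neg_one_pow] at hne ⊢; rcases hpm i with h1 | h1 <;> simp_all
      · rw [ho.neg_one_pow] at hne ⊢; rcases hpm i with h1 | h1 <;> simp_all
    have hdi' : (d i : ℝ) = -(-1:ℝ)^i := by rw [hdi2]; push_cast; ring
    set T := x - ((1 - (-1/2:ℝ)^i)/3 + (d i:ℝ)/2^(i+1)) with hTdef
    have h2i : ((2:ℝ))^i ≠ 0 := by positivity
    have key : x - 1/3 - T = -(-1:ℝ)^i * (5/6 * (1/2)^i) := by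
      rw [hTdef, hdi']
      have e1 : (-1/2:ℝ)^i = (-1:ℝ)^i * (1/2)^i := by rw [← mul_pow]; norm_num
      have e3 : ((1:ℝ)/2)^i = 1/2^i := by rw [div_pow, one_pow]
      rw [e1, e3, pow_succ]
      field_simp
      ring
    have habs : 5/6 * ((1:ℝ)/2)^i ≤ |x - 1/3| + |T| := by
      calc 5/6 * ((1:ℝ)/2)^i = |x - 1/3 - T| := by
            rw [key, abs_mul, abs_neg, abs_pow, abs_neg, abs_one, one_pow, one_mul,
              abs_of_nonneg (by positivity)]
        _ ≤ |x - 1/3| + |T| := abs_sub _ _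
    have hk2 : ((1:ℝ)/2)^k ≤ (1/2)^(i+1) :=
      pow_le_pow_of_le_one (by norm_num) (by norm_num) hik
    have hpos : (0:ℝ) < (1/2)^i := by positivity
    have hstep : ((1:ℝ)/2)^(i+1) = (1/2)^i * (1/2) := pow_succ _ _
    nlinarith [hT, hxk, hk2, habs]

lemma key_inner (v : ℕ → ℕ → ENNReal) (n : ℕ) :
    ∑' m, (if n ≤ m ∧ Odd (m - n) then v n m else 0) = ∑' k, v n (n + 2*k + 1) := by
  have hinj : Function.Injective (fun k : ℕ => n + 2*k + 1) := fun a b h => by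
    simpa using h
  have hsupp : Function.support (fun m => if n ≤ m ∧ Odd (m - n) then v n m else 0)
      ⊆ Set.range (fun k : ℕ => n + 2*k + 1) := by
    intro m hm
    by_cases h : n ≤ m ∧ Odd (m - n)
    · obtain ⟨t, ht⟩ := h.2
      exact ⟨t, by simp; omega⟩
    · simp [h] at hm
  rw [← hinj.tsum_eq hsupp]
  refine tsum_congr fun k => ?_
  have h1 : n ≤ n + 2*k + 1 := by omega
  have h2 : Odd (n + 2*k + 1 - n) := ⟨k, by omega⟩
  simp [h1, h2]

theorem stmt_16 (u : ℕ → ℕ → ℝ) (hu : ∀ n m, n ≤ m → 0 ≤ u n m)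
    (d : ℝ → ℕ → ℤ)
    (hd : ∀ᵐ x ∂(volume.restrict (Set.Icc (-1 : ℝ) 1)),
      (∀ n, d x n = 1 ∨ d x n = -1) ∧ HasSum (fun n : ℕ => (d x n : ℝ) / 2 ^ (n + 1)) x)
    (hd13 : ∀ n, d (1 / 3) n = (-1) ^ n)
    (hdm13 : ∀ n, d (-(1 / 3)) n = (-1) ^ (n + 1)) :
    U (fun n m => ENNReal.ofReal (u n m)) d (1 / 3) =
        ∑' (k : ℕ) (n : ℕ), ENNReal.ofReal (u n (n + 2 * k + 1)) ∧
    U (fun n m => ENNReal.ofReal (u n m)) d (-(1 / 3)) =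
        U (fun n m => ENNReal.ofReal (u n m)) d (1 / 3) ∧
    essSup (U (fun n m => ENNReal.ofReal (u n m)) d)
        (volume.restrict (Set.Icc (-1 : ℝ) 1)) =
      U (fun n m => ENNReal.ofReal (u n m)) d (1 / 3) := by
  set v : ℕ → ℕ → ENNReal := fun n m => ENNReal.ofReal (u n m) with hv
  set μ := volume.restrict (Set.Icc (-1 : ℝ) 1) with hμ
  have hsum13 : ∀ n m : ℕ, (∑ j ∈ Finset.Icc n m, d (1/3) j)
      = ∑ j ∈ Finset.Icc n m, (-1:ℤ)^j :=
    fun n m => Finset.sum_congr rfl fun j _ => hd13 j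
  have hcond13 : ∀ p : ℕ × ℕ,
      (p.1 ≤ p.2 ∧ (∑ j ∈ Finset.Icc p.1 p.2, d (1/3) j) = 0)
        ↔ (p.1 ≤ p.2 ∧ Odd (p.2 - p.1)) := by
    intro p
    constructor
    · rintro ⟨h, h0⟩
      rw [hsum13] at h0
      exact ⟨h, (lemA _ _ h).mp h0⟩
    · rintro ⟨h, ho⟩
      exact ⟨h, by rw [hsum13]; exact (lemA _ _ h).mpr ho⟩
  have hU13 : U v d (1/3)
      = ∑' p : ℕ × ℕ, (if p.1 ≤ p.2 ∧ Odd (p.2 - p.1) then v p.1 p.2 else 0) := by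
    simp only [U]
    exact tsum_congr fun p => if_congr (hcond13 p) rfl rfl
  have part1 : U v d (1/3) = ∑' (k : ℕ) (n : ℕ), v n (n + 2*k + 1) := by
    rw [hU13,
      ENNReal.tsum_prod (f := fun a b => if a ≤ b ∧ Odd (b - a) then v a b else 0)]
    rw [tsum_congr fun n => key_inner v n]
    exact ENNReal.tsum_comm
  have part2 : U v d (-(1/3)) = U v d (1/3) := by
    simp only [U]
    refine tsum_congr fun p => if_congr ?_ rfl rfl
    have hneg : (∑ j ∈ Finset.Icc p.1 p.2, d (-(1/3)) j)
        = -∑ j ∈ Finset.Icc p.1 p.2, d (1/3) j := by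
      rw [← Finset.sum_neg_distrib]
      refine Finset.sum_congr rfl fun j _ => ?_
      rw [hdm13 j, hd13 j, pow_succ]
      ring
    rw [hneg, neg_eq_zero]
  have haeLe : ∀ᵐ x ∂μ, U v d x ≤ U v d (1/3) := by
    filter_upwards [hd] with x hx
    simp only [U]
    refine ENNReal.tsum_le_tsum fun p => ?_
    by_cases h : p.1 ≤ p.2 ∧ (∑ j ∈ Finset.Icc p.1 p.2, d x j) = 0
    · have hodd : Odd (p.2 - p.1) := lemB (d x) hx.1 p.1 p.2 h.1 h.2
      rw [if_pos h, if_pos ((hcond13 p).mpr ⟨h.1, hodd⟩)]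
    · rw [if_neg h]; exact zero_le
  have hle : essSup (U v d) μ ≤ U v d (1/3) := essSup_le_of_ae_le _ haeLe
  have hge : U v d (1/3) ≤ essSup (U v d) μ := by
    rw [hU13, ENNReal.tsum_eq_iSup_sum]
    refine iSup_le fun s => ?_
    set k := (s.sup fun p : ℕ × ℕ => p.2) + 1 with hk
    set δ : ℝ := (1/2)^k/6 with hδdef
    have hδ : 0 < δ := by positivity
    by_contra hlt
    push_neg at hlt
    have hae2 := ae_lt_of_essSup_lt hlt
    have hI : Set.Ioo (1/3 : ℝ) (1/3 + δ) ⊆ Set.Icc (-1 : ℝ) 1 := by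
      intro y hy
      have hδ1 : δ ≤ 1/6 := by
        rw [hδdef]
        have : ((1:ℝ)/2)^k ≤ 1 := pow_le_one₀ (by norm_num) (by norm_num)
        linarith
      constructor <;> [skip; skip] <;> cases' hy with h1 h2 <;> linarith
    have hμI : μ (Set.Ioo (1/3 : ℝ) (1/3 + δ)) ≠ 0 := by
      rw [hμ, Measure.restrict_apply measurableSet_Ioo,
        Set.inter_eq_self_of_subset_left hI, Real.volume_Ioo]
      simp only [ne_eq, ENNReal.ofReal_eq_zero, not_le]
      linarith
    have hfreq : ∃ᵐ x ∂μ, x ∈ Set.Ioo (1/3 : ℝ) (1/3 + δ) :=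
      frequently_ae_mem_iff.mpr hμI
    obtain ⟨x, hxI, hxprops, hxlt⟩ := (hfreq.and_eventually (hd.and hae2)).exists
    have hxk : |x - 1/3| < (1/2)^k / 6 := by
      rw [abs_sub_lt_iff]
      constructor <;> [skip; skip] <;> cases' hxI with h1 h2 <;>
        [linarith; linarith]
    have hforce := digits_force (d x) hxprops.1 x hxprops.2 k hxk
    have hcle : (∑ p ∈ s, if p.1 ≤ p.2 ∧ Odd (p.2 - p.1) then v p.1 p.2 else 0)
        ≤ U v d x := by
      have h1 : ∀ p ∈ s,
          (if p.1 ≤ p.2 ∧ Odd (p.2 - p.1) then v p.1 p.2 else 0)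
            ≤ (if p.1 ≤ p.2 ∧ (∑ j ∈ Finset.Icc p.1 p.2, d x j) = 0
                then v p.1 p.2 else 0) := by
        intro p hp
        by_cases h : p.1 ≤ p.2 ∧ Odd (p.2 - p.1)
        · have hsump : (∑ j ∈ Finset.Icc p.1 p.2, d x j)
              = ∑ j ∈ Finset.Icc p.1 p.2, (-1:ℤ)^j := by
            refine Finset.sum_congr rfl fun j hj => ?_
            have hj2 : j ≤ p.2 := (Finset.mem_Icc.mp hj).2
            have hjk : j < k := by
              have h2 : p.2 ≤ s.sup fun q : ℕ × ℕ => q.2 := by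
                simpa using Finset.le_sup (f := fun q : ℕ × ℕ => q.2) hp
              omega
            exact hforce j hjk
          rw [if_pos h, if_pos ⟨h.1, by rw [hsump]; exact (lemA _ _ h.1).mpr h.2⟩]
        · rw [if_neg h]; exact zero_le
      calc (∑ p ∈ s, if p.1 ≤ p.2 ∧ Odd (p.2 - p.1) then v p.1 p.2 else 0)
          ≤ ∑ p ∈ s, (if p.1 ≤ p.2 ∧ (∑ j ∈ Finset.Icc p.1 p.2, d x j) = 0
              then v p.1 p.2 else 0) := Finset.sum_le_sum h1
        _ ≤ U v d x := by
            simp only [U]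
            exact ENNReal.sum_le_tsum s
    exact absurd hxlt (not_lt.mpr hcle)
  exact ⟨part1, part2, le_antisymm hle hge⟩
end
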